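/- arXiv:1505.07346 — 5 statements merged into one kernel-verified Lean document; each statement's English description precedes it below -/
import Mathlib

section
/- Let G be a finite cyclic group generated by γ of order n invertible in k, acting γ-abelianly on a Lie algebra h (i.e., [g ▷ z, g' ▷ z'] = 0 for all g ≠ g' in G and z, z' ∈ h_γ := {y - γ ▷ y | y ∈ h}). Then the cocycle θ(x, y) := n⁻¹ Σ_{i=0}^{n-1} [γ^i ▷ x, γ^i ▷ y] vanishes for all x, y ∈ h_γ. -/
/-- for a γ-abelian action of a cyclic group `G = ⟨γ⟩` of order `n`
invertible in `k`, the cocycle `θ(x,y) = n⁻¹ Σ_i [γ^i ▷ x, γ^i ▷ y]` vanishes on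
`h_γ = {y - γ ▷ y | y ∈ h}`. -/
theorem stmt8 (k : Type*) [Field k] (h : Type*) [LieRing h] [LieAlgebra k h]
    (G : Type*) [Group G] [Fintype G] (γ : G) (n : ℕ)
    (hgen : ∀ x : G, x ∈ Subgroup.zpowers γ) (hord : orderOf γ = n)
    (hn : IsUnit ((n : k)))
    (φ : G →* (h ≃ₗ[k] h))
    (hLie : ∀ g : G, ∀ x y : h, φ g ⁅x, y⁆ = ⁅φ g x, φ g y⁆)
    (hab : ∀ g g' : G, g ≠ g' →
      ∀ z z' : h, (∃ y : h, z = y - φ γ y) → (∃ y : h, z' = y - φ γ y) →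
        ⁅φ g z, φ g' z'⁆ = 0) :
    ∀ x y : h, (∃ w : h, x = w - φ γ w) → (∃ w : h, y = w - φ γ w) →
      (n : k)⁻¹ • ∑ i ∈ Finset.range n, ⁅φ (γ ^ i) x, φ (γ ^ i) y⁆ = 0 := by
  intro x y hx hy
  have hsum : ∑ g : G, φ g y = 0 := by
    obtain ⟨w, rfl⟩ := hy
    have : ∑ g : G, φ g (φ γ w) = ∑ g : G, φ g w := by
      rw [← Equiv.sum_comp (Equiv.mulRight γ) (fun g => φ g w)]
      simp only [Equiv.coe_mulRight, map_mul]
      rfl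
    simp only [map_sub, Finset.sum_sub_distrib, this, sub_self]
  have hterm : ∀ g : G, ⁅φ g x, φ g y⁆ = 0 := by
    intro g
    have h1 : ∑ g' : G, ⁅φ g x, φ g' y⁆ = ⁅φ g x, φ g y⁆ := by
      refine Finset.sum_eq_single_of_mem g (Finset.mem_univ g) ?_
      intro g' _ hne
      exact hab g g' (Ne.symm hne) x y hx hy
    have h2 := map_sum (LieAlgebra.ad k h (φ g x)) (fun g' : G => φ g' y) Finset.univ
    simp only [LieAlgebra.ad_apply] at h2
    rw [← h1, ← h2, hsum, lie_zero]
  have : ∑ i ∈ Finset.range n, ⁅φ (γ ^ i) x, φ (γ ^ i) y⁆ = 0 :=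
    Finset.sum_eq_zero fun i _ => hterm (γ ^ i)
  rw [this, smul_zero]
end

section
/- Let G be a finite cyclic group generated by γ of order n invertible in k, acting γ-abelianly on a Lie algebra h. Then the map φ: h^G ⋊ h_γ → h, φ(g, x) := g + x is an isomorphism of Lie algebras, where h^G ⋊ h_γ is the semidirect product associated to the right action x ⇀ g := [x, g] of h^G on h_γ. -/
/-- for a γ-abelian action of a cyclic group `G = ⟨γ⟩` of order `n`
invertible in `k` on a Lie algebra `h`, the map `(g, x) ↦ g + x` is an isomorphism
of Lie algebras from the semidirect product `h^G ⋊ h_γ` (with right action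
`x ⇀ g = [x, g]`) onto `h`. -/
theorem stmt9 (k : Type*) [Field k] (h : Type*) [LieRing h] [LieAlgebra k h]
    (G : Type*) [Group G] [Fintype G] (γ : G) (n : ℕ)
    (hgen : ∀ x : G, x ∈ Subgroup.zpowers γ) (hord : orderOf γ = n)
    (hn : IsUnit ((n : k)))
    (φ : G →* (h ≃ₗ[k] h))
    (hLie : ∀ g : G, ∀ x y : h, φ g ⁅x, y⁆ = ⁅φ g x, φ g y⁆)
    (hab : ∀ g g' : G, g ≠ g' →
      ∀ z z' : h, (∃ y : h, z = y - φ γ y) → (∃ y : h, z' = y - φ γ y) →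
        ⁅φ g z, φ g' z'⁆ = 0)
    (HG HΓ : Submodule k h)
    (hHG : (HG : Set h) = {x : h | ∀ g : G, φ g x = x})
    (hHΓ : (HΓ : Set h) = {z : h | ∃ y : h, z = y - φ γ y}) :
    ∃ e : (HG × HΓ) ≃ₗ[k] h,
      (∀ p : HG × HΓ, e p = (p.1 : h) + (p.2 : h)) ∧
      (∀ (a b : HG) (x y : HΓ),
        -- the bracket of `h` corresponds to the semidirect product bracket
        ⁅(a : h) + (x : h), (b : h) + (y : h)⁆ =
          (⁅(a : h), (b : h)⁆ +
            (⁅(x : h), (y : h)⁆ + ⁅(x : h), (b : h)⁆ - ⁅(y : h), (a : h)⁆)) ∧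
        ⁅(a : h), (b : h)⁆ ∈ HG ∧
        (⁅(x : h), (y : h)⁆ + ⁅(x : h), (b : h)⁆ - ⁅(y : h), (a : h)⁆) ∈ HΓ) := by
  classical
  have hHG' : ∀ z : h, z ∈ HG ↔ ∀ g : G, φ g z = z := fun z => by
    rw [← SetLike.mem_coe, hHG]; rfl
  have hHΓ' : ∀ z : h, z ∈ HΓ ↔ ∃ y : h, z = y - φ γ y := fun z => by
    rw [← SetLike.mem_coe, hHΓ]; rfl
  -- basic telescoping: `x - φ (γ^m) x ∈ HΓ`
  have hpowΓ : ∀ (x : h) (m : ℕ), x - φ (γ ^ m) x ∈ HΓ := by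
    intro x m
    induction m with
    | zero =>
        have : φ (γ ^ 0) x = x := by rw [pow_zero, map_one]; rfl
        rw [this, sub_self]; exact HΓ.zero_mem
    | succ m ih =>
        have key : x - φ (γ ^ (m + 1)) x
            = (x - φ (γ ^ m) x) + (φ (γ ^ m) x - φ γ (φ (γ ^ m) x)) := by
          have : φ (γ ^ (m + 1)) x = φ γ (φ (γ ^ m) x) := by
            rw [pow_succ', map_mul]; rfl
          rw [this]; abel
        rw [key]
        exact HΓ.add_mem ih ((hHΓ' _).mpr ⟨φ (γ ^ m) x, rfl⟩)
  have hsubΓ : ∀ (x : h) (g : G), x - φ g x ∈ HΓ := by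
    intro x g
    obtain ⟨m, hm⟩ := mem_powers_iff_mem_zpowers.mpr (hgen g)
    rw [← hm]
    exact hpowΓ x m
  have hcard : Fintype.card G = n := by
    rw [← hord, orderOf_eq_card_of_forall_mem_zpowers hgen]
    exact Nat.card_eq_fintype_card.symm
  -- the averaging sum is invariant
  have hinv : ∀ (x : h) (g' : G), φ g' (∑ g : G, φ g x) = ∑ g : G, φ g x := by
    intro x g'
    rw [map_sum]
    exact Fintype.sum_equiv (Equiv.mulLeft g') _ _ (fun g => by
      rw [Equiv.coe_mulLeft, map_mul]; rfl)
  obtain ⟨c, hcn⟩ : ∃ c : k, c * (n : k) = 1 :=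
    ⟨(↑hn.unit⁻¹ : k), by simpa [hn.unit_spec] using hn.val_inv_mul⟩
  -- decomposition
  have hcodis : ∀ x : h, x ∈ HG ⊔ HΓ := by
    intro x
    have h1 : c • (∑ g : G, φ g x) ∈ HG := by
      rw [hHG']
      intro g'
      rw [map_smul, hinv]
    have h2 : x - c • (∑ g : G, φ g x) ∈ HΓ := by
      have hx : x - c • (∑ g : G, φ g x) = c • (∑ g : G, (x - φ g x)) := by
        rw [Finset.sum_sub_distrib, smul_sub, Finset.sum_const, Finset.card_univ, hcard,
          ← Nat.cast_smul_eq_nsmul k, smul_smul, hcn, one_smul]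
      rw [hx]
      exact HΓ.smul_mem c (HΓ.sum_mem fun g _ => hsubΓ x g)
    have := Submodule.add_mem_sup h1 h2
    simpa using this
  -- disjointness
  have hdis : Disjoint HG HΓ := by
    rw [Submodule.disjoint_def]
    intro z hzG hzΓ
    obtain ⟨y, hy⟩ := (hHΓ' z).mp hzΓ
    have hzero : ∑ i ∈ Finset.range n, φ (γ ^ i) z = 0 := by
      have : ∀ i : ℕ, φ (γ ^ i) z = φ (γ ^ i) y - φ (γ ^ (i + 1)) y := by
        intro i
        rw [hy, map_sub]
        congr 1
        rw [pow_succ, map_mul]; rfl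
      rw [Finset.sum_congr rfl fun i _ => this i, Finset.sum_range_sub']
      have hγn : γ ^ n = 1 := by rw [← hord]; exact pow_orderOf_eq_one γ
      simp [hγn]
    have hz : ∑ i ∈ Finset.range n, φ (γ ^ i) z = (n : k) • z := by
      rw [Finset.sum_congr rfl fun i _ => (hHG' z).mp hzG (γ ^ i)]
      simp [Nat.cast_smul_eq_nsmul]
    have : (n : k) • z = 0 := by rw [← hz, hzero]
    calc z = c • ((n : k) • z) := by rw [smul_smul, hcn, one_smul]
    _ = 0 := by rw [this, smul_zero]
  have hcompl : IsCompl HG HΓ := ⟨hdis, codisjoint_iff.mpr (by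
    rw [eq_top_iff]; exact fun x _ => hcodis x)⟩
  refine ⟨Submodule.prodEquivOfIsCompl HG HΓ hcompl, fun p => rfl, fun a b x y => ?_⟩
  obtain ⟨a, ha⟩ := a; obtain ⟨b, hb⟩ := b; obtain ⟨x, hx⟩ := x; obtain ⟨y, hy⟩ := y
  simp only [Submodule.coe_mk]
  have haG := (hHG' a).mp ha
  have hbG := (hHG' b).mp hb
  have hxΓ := (hHΓ' x).mp hx
  have hyΓ := (hHΓ' y).mp hy
  refine ⟨?_, ?_, ?_⟩
  · have hskew : ⁅a, y⁆ = -⁅y, a⁆ := (lie_skew (x := a) (y := y)).symm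
    rw [add_lie, lie_add, lie_add, hskew]
    abel
  · rw [hHG']
    intro g
    rw [hLie g, haG g, hbG g]
  · -- each of the three brackets lies in HΓ
    have hmixed : ∀ w v : h, (∃ u : h, w = u - φ γ u) → (∀ g : G, φ g v = v) →
        ⁅w, v⁆ ∈ HΓ := by
      intro w v hw hv
      obtain ⟨u, hu⟩ := hw
      refine (hHΓ' _).mpr ⟨⁅u, v⁆, ?_⟩
      rw [hLie γ, hv γ, hu, sub_lie]
    have h1 : ⁅x, b⁆ ∈ HΓ := hmixed x b hxΓ hbG
    have h2 : ⁅y, a⁆ ∈ HΓ := hmixed y a hyΓ haG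
    have h3 : ⁅x, y⁆ ∈ HΓ := by
      -- `⁅x, y⁆ = ⁅s, y⁆` where `s = ∑ g, φ g x` is invariant
      have hs : ∀ g : G, φ g (∑ g' : G, φ g' x) = ∑ g' : G, φ g' x := hinv x
      have hsum : ⁅∑ g : G, φ g x, y⁆ = ⁅x, y⁆ := by
        have hmap : ⁅∑ g : G, φ g x, y⁆ = ∑ g : G, ⁅φ g x, y⁆ :=
          map_sum (AddMonoidHom.mk' (fun z => ⁅z, y⁆) (fun a b => add_lie a b y)) _ _
        rw [hmap, Finset.sum_eq_single (1 : G)]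
        · rw [map_one]; rfl
        · intro g _ hg
          have := hab g 1 hg x y hxΓ hyΓ
          rwa [map_one] at this
        · intro habs; exact absurd (Finset.mem_univ 1) habs
      have hmem : ⁅y, ∑ g : G, φ g x⁆ ∈ HΓ := hmixed y _ hyΓ hs
      have : ⁅x, y⁆ = -⁅y, ∑ g : G, φ g x⁆ := by
        rw [lie_skew, hsum]
      rw [this]
      exact HΓ.neg_mem hmem
    exact HΓ.sub_mem (HΓ.add_mem h3 h1) h2
end

section
/- Let g ⋊ h be the semidirect product of Lie algebras associated to a right action ↼: h × g → h, with g abelian and h perfect (h = [h,h]). Then Gal(g ⋊ h / g) is isomorphic to the group of Lie algebra automorphisms of h that are also right g-module maps, i.e., {u ∈ Aut_Lie(h) | u(x ↼ g) = u(x) ↼ g for all g ∈ g, x ∈ h}. -/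
section Stmt15Aux

variable {k : Type*} [Field k] {L : Type*} [LieRing L] [LieAlgebra k L]
  (g : LieSubalgebra k L) (H : LieIdeal k L)

theorem stmt15_brH (habelian : ∀ a ∈ g, ∀ b ∈ g, ⁅a, b⁆ = (0 : L))
    (hcompl : IsCompl g.toSubmodule H.toSubmodule) (x y : L) : ⁅x, y⁆ ∈ H := by
  obtain ⟨a, m, ha, hm, hx⟩ := Submodule.codisjoint_iff_exists_add_eq.mp hcompl.codisjoint x
  obtain ⟨b, n, hb, hn, hy⟩ := Submodule.codisjoint_iff_exists_add_eq.mp hcompl.codisjoint y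
  have hm' : m ∈ H := hm
  have hn' : n ∈ H := hn
  rw [← hx, ← hy, add_lie, lie_add, lie_add, habelian a ha b hb, zero_add]
  refine add_mem (H.lie_mem hn') (add_mem ?_ (H.lie_mem hn'))
  rw [← lie_skew]
  exact neg_mem (H.lie_mem hm')

theorem stmt15_mapH (hperfect : ⁅H, H⁆ = H) (σ : L ≃ₗ[k] L)
    (hσ : ∀ x y : L, σ ⁅x, y⁆ = ⁅σ x, σ y⁆)
    (hbr : ∀ x y : L, ⁅x, y⁆ ∈ H) {x : L} (hx : x ∈ H) : σ x ∈ H := by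
  rw [← hperfect, ← LieSubmodule.mem_toSubmodule,
    LieSubmodule.lieIdeal_oper_eq_linear_span] at hx
  have hle : Submodule.span k { m : L | ∃ (p : H) (n : H), ⁅(p : L), (n : L)⁆ = m } ≤
      H.toSubmodule.comap (σ : L →ₗ[k] L) := by
    rw [Submodule.span_le]
    rintro m ⟨p, n, rfl⟩
    have h : σ ⁅(p : L), (n : L)⁆ ∈ H := by rw [hσ]; exact hbr _ _
    exact h
  exact hle hx

end Stmt15Aux

/-- for a semidirect product `L = g ⋊ h` of Lie algebras (formulated
internally: `g` an abelian subalgebra, `H` a perfect ideal, complementary as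
submodules), `Gal(L/g)` is isomorphic to the group of automorphisms of `H` that
commute with the action `x ↼ a = [x, a]` of `g`. -/
theorem stmt15 (k : Type*) [Field k] (L : Type*) [LieRing L] [LieAlgebra k L]
    (g : LieSubalgebra k L) (H : LieIdeal k L)
    (hcompl : IsCompl g.toSubmodule H.toSubmodule)
    (habelian : ∀ a ∈ g, ∀ b ∈ g, ⁅a, b⁆ = (0 : L))
    (hperfect : ⁅H, H⁆ = H) :
    ∃ F : {σ : L ≃ₗ[k] L // (∀ x y : L, σ ⁅x, y⁆ = ⁅σ x, σ y⁆) ∧ ∀ a ∈ g, σ a = a} ≃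
          {u : H ≃ₗ[k] H //
            (∀ x y z : H, (z : L) = ⁅(x : L), (y : L)⁆ →
              (u z : L) = ⁅(u x : L), (u y : L)⁆) ∧
            (∀ a ∈ g, ∀ x y : H, (y : L) = ⁅(x : L), a⁆ →
              (u y : L) = ⁅(u x : L), a⁆)},
      ∀ σ τ ρ : {σ : L ≃ₗ[k] L // (∀ x y : L, σ ⁅x, y⁆ = ⁅σ x, σ y⁆) ∧ ∀ a ∈ g, σ a = a},
        ρ.val = σ.val * τ.val → (F ρ).val = (F σ).val * (F τ).val := by
  classical
  have hbr : ∀ x y : L, ⁅x, y⁆ ∈ H := stmt15_brH g H habelian hcompl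
  set π₁ : L →ₗ[k] g.toSubmodule := g.toSubmodule.linearProjOfIsCompl H.toSubmodule hcompl
    with hπ₁def
  set π₂ : L →ₗ[k] H.toSubmodule := H.toSubmodule.linearProjOfIsCompl g.toSubmodule hcompl.symm
    with hπ₂def
  have hsum : ∀ x : L, (π₁ x : L) + (π₂ x : L) = x := fun x =>
    Submodule.projection_add_projection_eq_self hcompl x
  have hπ₁g : ∀ (x : L) (hx : x ∈ g), π₁ x = ⟨x, hx⟩ := fun x hx =>
    Submodule.linearProjOfIsCompl_apply_left hcompl ⟨x, hx⟩
  have hπ₁H : ∀ x ∈ H, π₁ x = 0 := fun x hx =>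
    Submodule.projectionOnto_apply_of_mem_right hcompl hx
  have hπ₂H : ∀ (x : L) (hx : x ∈ H), π₂ x = ⟨x, hx⟩ := fun x hx =>
    Submodule.linearProjOfIsCompl_apply_left hcompl.symm ⟨x, hx⟩
  have hπ₂g : ∀ x ∈ g, π₂ x = 0 := fun x hx =>
    Submodule.projectionOnto_apply_of_mem_right hcompl.symm hx
  -- the forward map: restriction to H
  have hmapeq : ∀ σ : {σ : L ≃ₗ[k] L // (∀ x y : L, σ ⁅x, y⁆ = ⁅σ x, σ y⁆) ∧ ∀ a ∈ g, σ a = a},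
      H.toSubmodule.map (σ.val : L →ₗ[k] L) = H.toSubmodule := by
    rintro ⟨σ, hσ, hfix⟩
    have hσsymm : ∀ x y : L, σ.symm ⁅x, y⁆ = ⁅σ.symm x, σ.symm y⁆ := by
      intro x y
      apply σ.injective
      rw [σ.apply_symm_apply, hσ, σ.apply_symm_apply, σ.apply_symm_apply]
    apply le_antisymm
    · rintro _ ⟨m, hm, rfl⟩
      exact stmt15_mapH H hperfect σ hσ hbr hm
    · intro m hm
      exact ⟨σ.symm m, stmt15_mapH H hperfect σ.symm hσsymm hbr hm, σ.apply_symm_apply m⟩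
  let res : {σ : L ≃ₗ[k] L // (∀ x y : L, σ ⁅x, y⁆ = ⁅σ x, σ y⁆) ∧ ∀ a ∈ g, σ a = a} →
      (H ≃ₗ[k] H) := fun σ =>
    (σ.val.ofSubmodules H.toSubmodule H.toSubmodule (hmapeq σ) : H ≃ₗ[k] H)
  have happ : ∀ σ, ∀ x : H, ((res σ) x : L) = σ.val (x : L) := fun σ x => rfl
  let Fto : {σ : L ≃ₗ[k] L // (∀ x y : L, σ ⁅x, y⁆ = ⁅σ x, σ y⁆) ∧ ∀ a ∈ g, σ a = a} →
      {u : H ≃ₗ[k] H //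
        (∀ x y z : H, (z : L) = ⁅(x : L), (y : L)⁆ →
          (u z : L) = ⁅(u x : L), (u y : L)⁆) ∧
        (∀ a ∈ g, ∀ x y : H, (y : L) = ⁅(x : L), a⁆ →
          (u y : L) = ⁅(u x : L), a⁆)} := fun σ =>
    ⟨res σ, by
      constructor
      · intro x y z hz
        rw [happ σ z, happ σ x, happ σ y, hz, σ.2.1]
      · intro a ha x y hy
        rw [happ σ y, happ σ x, hy, σ.2.1, σ.2.2 a ha]⟩
  -- the inverse construction
  let f : (H ≃ₗ[k] H) → (L →ₗ[k] L) := fun u =>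
    g.toSubmodule.subtype ∘ₗ π₁ + H.toSubmodule.subtype ∘ₗ (u : ↥H →ₗ[k] ↥H) ∘ₗ π₂
  have hfapp : ∀ (u : H ≃ₗ[k] H) (x : L), f u x = (π₁ x : L) + ((u (π₂ x) : H) : L) :=
    fun u x => rfl
  have hππf : ∀ (u : H ≃ₗ[k] H) (x : L), π₁ (f u x) = π₁ x ∧ π₂ (f u x) = u (π₂ x) := by
    intro u x
    constructor
    · rw [hfapp, map_add, hπ₁g (π₁ x : L) (π₁ x).2, hπ₁H _ (u (π₂ x)).2, add_zero]
    · rw [hfapp, map_add, hπ₂g (π₁ x : L) (π₁ x).2, hπ₂H _ (u (π₂ x)).2, zero_add]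
      exact Subtype.ext rfl
  have hinv : ∀ (u : H ≃ₗ[k] H), (f u.symm) ∘ₗ (f u) = LinearMap.id := by
    intro u
    ext x
    show f u.symm (f u x) = x
    rw [hfapp, (hππf u x).1, (hππf u x).2, u.symm_apply_apply, hsum]
  let σof : (H ≃ₗ[k] H) → (L ≃ₗ[k] L) := fun u =>
    LinearEquiv.ofLinear (f u) (f u.symm) (by simpa using hinv u.symm) (hinv u)
  have hσofapp : ∀ (u : H ≃ₗ[k] H) (x : L), σof u x = (π₁ x : L) + ((u (π₂ x) : H) : L) :=
    fun u x => hfapp u x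
  have hσofg : ∀ (u : H ≃ₗ[k] H), ∀ a ∈ g, σof u a = a := by
    intro u a ha
    rw [hσofapp, hπ₁g a ha, hπ₂g a ha, map_zero]
    simp
  have hσofH : ∀ (u : H ≃ₗ[k] H) (m : H), σof u (m : L) = (u m : L) := by
    intro u m
    have h2 : π₂ (m : L) = ⟨(m : L), m.2⟩ := hπ₂H _ m.2
    have h2' : u (π₂ (m : L)) = u m := by
      rw [h2]; exact congrArg u (Subtype.ext rfl)
    rw [hσofapp, hπ₁H _ m.2, h2']
    simp
  have hσofsum : ∀ (u : H ≃ₗ[k] H), ∀ a ∈ g, ∀ m : H,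
      σof u (a + (m : L)) = a + (u m : L) := by
    intro u a ha m
    rw [map_add, hσofg u a ha, hσofH u m]
  have hσofbr : ∀ u : {u : H ≃ₗ[k] H //
        (∀ x y z : H, (z : L) = ⁅(x : L), (y : L)⁆ →
          (u z : L) = ⁅(u x : L), (u y : L)⁆) ∧
        (∀ a ∈ g, ∀ x y : H, (y : L) = ⁅(x : L), a⁆ →
          (u y : L) = ⁅(u x : L), a⁆)},
      ∀ x y : L, σof u.val ⁅x, y⁆ = ⁅σof u.val x, σof u.val y⁆ := by
    rintro ⟨u, hu1, hu2⟩ x y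
    have key : ∀ a, a ∈ g → ∀ b, b ∈ g → ∀ m n : H,
        σof u ⁅a + (m : L), b + (n : L)⁆ =
          ⁅σof u (a + (m : L)), σof u (b + (n : L))⁆ := by
      intro a ha b hb m n
      have hexp : ⁅a + (m : L), b + (n : L)⁆ =
          ⁅(m : L), b⁆ - ⁅(n : L), a⁆ + ⁅(m : L), (n : L)⁆ := by
        rw [add_lie, lie_add, lie_add, habelian a ha b hb, zero_add, ← lie_skew a (n : L)]
        abel
      set y1 : H := (⟨⁅(m : L), b⁆, hbr _ _⟩ : H) with hy1def
      set y2 : H := (⟨⁅(n : L), a⁆, hbr _ _⟩ : H) with hy2def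
      set y3 : H := (⟨⁅(m : L), (n : L)⁆, hbr _ _⟩ : H) with hy3def
      have huy1 : (u y1 : L) = ⁅(u m : L), b⁆ := hu2 b hb m y1 rfl
      have huy2 : (u y2 : L) = ⁅(u n : L), a⁆ := hu2 a ha n y2 rfl
      have huy3 : (u y3 : L) = ⁅(u m : L), (u n : L)⁆ := hu1 m n y3 rfl
      have hzc : ⁅a + (m : L), b + (n : L)⁆ = ((y1 - y2 + y3 : H) : L) := by
        rw [LieSubmodule.coe_add, LieSubmodule.coe_sub, hy1def, hy2def, hy3def]
        exact hexp
      calc σof u ⁅a + (m : L), b + (n : L)⁆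
          = σof u ((y1 - y2 + y3 : H) : L) := by rw [hzc]
        _ = ((u (y1 - y2 + y3) : H) : L) := hσofH u _
        _ = (u y1 : L) - (u y2 : L) + (u y3 : L) := by
            rw [map_add, map_sub, LieSubmodule.coe_add, LieSubmodule.coe_sub]
        _ = ⁅(u m : L), b⁆ - ⁅(u n : L), a⁆ + ⁅(u m : L), (u n : L)⁆ := by
            rw [huy1, huy2, huy3]
        _ = ⁅a + (u m : L), b + (u n : L)⁆ := by
            rw [add_lie, lie_add, lie_add, habelian a ha b hb, zero_add,
              ← lie_skew a ((u n : H) : L)]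
            abel
        _ = ⁅σof u (a + (m : L)), σof u (b + (n : L))⁆ := by
            rw [hσofsum u a ha m, hσofsum u b hb n]
    have hx : (π₁ x : L) + (((⟨(π₂ x : L), (π₂ x).2⟩ : H) : H) : L) = x := hsum x
    have hy : (π₁ y : L) + (((⟨(π₂ y : L), (π₂ y).2⟩ : H) : H) : L) = y := hsum y
    rw [← hx, ← hy]
    exact key (π₁ x : L) (π₁ x).2 (π₁ y : L) (π₁ y).2 _ _
  let Finv : {u : H ≃ₗ[k] H //
        (∀ x y z : H, (z : L) = ⁅(x : L), (y : L)⁆ →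
          (u z : L) = ⁅(u x : L), (u y : L)⁆) ∧
        (∀ a ∈ g, ∀ x y : H, (y : L) = ⁅(x : L), a⁆ →
          (u y : L) = ⁅(u x : L), a⁆)} →
      {σ : L ≃ₗ[k] L // (∀ x y : L, σ ⁅x, y⁆ = ⁅σ x, σ y⁆) ∧ ∀ a ∈ g, σ a = a} := fun u =>
    ⟨σof u.val, hσofbr u, hσofg u.val⟩
  refine ⟨⟨Fto, Finv, ?_, ?_⟩, ?_⟩
  · -- left inverse
    rintro ⟨σ, hσ, hfix⟩
    apply Subtype.ext
    apply LinearEquiv.toLinearMap_injective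
    ext x
    show σof (res ⟨σ, hσ, hfix⟩) x = σ x
    rw [hσofapp]
    have h1 : ((res ⟨σ, hσ, hfix⟩) (π₂ x) : L) = σ (π₂ x : L) := happ _ _
    rw [h1, ← hfix (π₁ x : L) (π₁ x).2, ← map_add, hsum]
  · -- right inverse
    rintro ⟨u, hu1, hu2⟩
    apply Subtype.ext
    apply LinearEquiv.toLinearMap_injective
    ext m
    show ((res (Finv ⟨u, hu1, hu2⟩)) m : L) = (u m : L)
    have h1 : ((res (Finv ⟨u, hu1, hu2⟩)) m : L) = σof u (m : L) := happ _ _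
    rw [h1, hσofH]
  · -- multiplicativity
    rintro σ τ ρ hρ
    apply LinearEquiv.toLinearMap_injective
    ext m
    show ((res ρ) m : L) = ((res σ) ((res τ) m) : L)
    rw [happ ρ m, happ σ ((res τ) m), happ τ m, hρ]
    rfl
end

section
/- Let g be a complete Lie algebra (trivial center and all derivations inner) and H(g) = g × Der(g) its holomorph with bracket [(g,φ),(h,ψ)] = ([g,h] + φ(h) - ψ(g), [φ,ψ]). Then Gal(H(g)/g) ≅ Aut_Lie(g): every automorphism of H(g) fixing g × {0} is determined by a Lie algebra automorphism τ of g via ad_x ↦ (x - τ(x), ad_{τ(x)}). -/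
/-- for a complete Lie algebra `g` (trivial center, all derivations
inner) and its holomorph `H(g) = g × Der(g)` with bracket
`[(g,φ),(h,ψ)] = ([g,h] + φ(h) - ψ(g), [φ,ψ])`, one has `Gal(H(g)/g) ≅ Aut_Lie(g)`,
every automorphism of `H(g)` fixing `g` being given by
`ad_x ↦ (x - τ(x), ad_{τ(x)})` for a Lie algebra automorphism `τ` of `g`. -/
theorem stmt17 (k : Type*) [Field k] (g : Type*) [LieRing g] [LieAlgebra k g]
    (hZ : ∀ x : g, (∀ y : g, ⁅x, y⁆ = 0) → x = 0)
    (hInner : ∀ D : LieDerivation k g g, ∃ x : g, ∀ y : g, D y = ⁅x, y⁆)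
    (Hol : Type*) [LieRing Hol] [LieAlgebra k Hol]
    (E : Hol ≃ₗ[k] (g × LieDerivation k g g))
    (hbr : ∀ p q : Hol,
      E ⁅p, q⁆ = (⁅(E p).1, (E q).1⁆ + (E p).2 ((E q).1) - (E q).2 ((E p).1),
                   ⁅(E p).2, (E q).2⁆)) :
    ∃ F : {σ : Hol ≃ₗ[k] Hol // (∀ x y : Hol, σ ⁅x, y⁆ = ⁅σ x, σ y⁆) ∧
            ∀ a : g, σ (E.symm (a, 0)) = E.symm (a, 0)} ≃
          {τ : g ≃ₗ[k] g // ∀ x y : g, τ ⁅x, y⁆ = ⁅τ x, τ y⁆},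
      (∀ σ τ ρ : {σ : Hol ≃ₗ[k] Hol // (∀ x y : Hol, σ ⁅x, y⁆ = ⁅σ x, σ y⁆) ∧
            ∀ a : g, σ (E.symm (a, 0)) = E.symm (a, 0)},
        ρ.val = σ.val * τ.val → (F ρ).val = (F σ).val * (F τ).val) ∧
      (∀ σ : {σ : Hol ≃ₗ[k] Hol // (∀ x y : Hol, σ ⁅x, y⁆ = ⁅σ x, σ y⁆) ∧
            ∀ a : g, σ (E.symm (a, 0)) = E.symm (a, 0)},
        ∀ x : g, ∀ D D' : LieDerivation k g g,
          (∀ y : g, D y = ⁅x, y⁆) → (∀ y : g, D' y = ⁅(F σ).val x, y⁆) →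
          σ.val (E.symm (0, D)) = E.symm (x - (F σ).val x, D')) := by
  classical
  -- `ad` is a linear bijection
  have adinj : Function.Injective ((LieDerivation.ad k g : g →ₗ⁅k⁆ _) : g → LieDerivation k g g) := by
    intro x y h
    have hxy : ∀ z : g, ⁅x - y, z⁆ = 0 := by
      intro z
      have : LieDerivation.ad k g x z = LieDerivation.ad k g y z := by rw [h]
      simp only [LieDerivation.ad_apply_apply] at this
      rw [sub_lie, this, sub_self]
    exact sub_eq_zero.mp (hZ _ hxy)
  have adsurj : Function.Surjective ((LieDerivation.ad k g : g →ₗ⁅k⁆ _) : g → LieDerivation k g g) := by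
    intro D
    obtain ⟨x, hx⟩ := hInner D
    exact ⟨x, by ext y; simp [hx y]⟩
  let adE : g ≃ₗ[k] LieDerivation k g g :=
    LinearEquiv.ofBijective (LieDerivation.ad k g).toLinearMap ⟨adinj, adsurj⟩
  have hadE : ∀ x : g, adE x = LieDerivation.ad k g x := fun _ => rfl
  have hadapp : ∀ x y : g, adE x y = ⁅x, y⁆ := by intro x y; rw [hadE]; simp
  have hadsy : ∀ x : g, adE.symm (adE x) = x := fun x => adE.symm_apply_apply x
  have hadsy' : ∀ D : LieDerivation k g g, adE (adE.symm D) = D := fun D => adE.apply_symm_apply D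
  have hadlie : ∀ x y : g, adE ⁅x, y⁆ = ⁅adE x, adE y⁆ := by
    intro x y; rw [hadE, hadE, hadE]; exact (LieDerivation.ad k g).map_lie x y
  -- bracket formula on explicit pairs
  have hb : ∀ (a : g) (D : LieDerivation k g g) (b : g) (D' : LieDerivation k g g),
      ⁅E.symm (a, D), E.symm (b, D')⁆ = E.symm (⁅a, b⁆ + D b - D' a, ⁅D, D'⁆) := by
    intro a D b D'
    apply E.injective
    rw [hbr, E.apply_symm_apply, E.apply_symm_apply, E.apply_symm_apply]
    -- the map T : automorphism of Hol ↦ linear endomorphism of g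
  let T : (Hol ≃ₗ[k] Hol) → (g →ₗ[k] g) := fun σv =>
    adE.symm.toLinearMap ∘ₗ (LinearMap.snd k g (LieDerivation k g g)) ∘ₗ E.toLinearMap ∘ₗ
      σv.toLinearMap ∘ₗ E.symm.toLinearMap ∘ₗ (LinearMap.prod 0 adE.toLinearMap)
  have hTdef : ∀ (σv : Hol ≃ₗ[k] Hol) (x : g),
      T σv x = adE.symm ((E (σv (E.symm (0, adE x)))).2) := fun _ _ => rfl
  -- characterization of a Galois automorphism on inner derivations
  have hchar : ∀ (σv : Hol ≃ₗ[k] Hol),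
      (∀ x y : Hol, σv ⁅x, y⁆ = ⁅σv x, σv y⁆) →
      (∀ a : g, σv (E.symm (a, 0)) = E.symm (a, 0)) →
      ∀ x : g, σv (E.symm (0, adE x)) = E.symm (x - T σv x, adE (T σv x)) := by
    intro σv hlie hfix x
    set p := σv (E.symm (0, adE x)) with hp
    have key : ∀ y : g, (E p).2 y = ⁅x - (E p).1, y⁆ := by
      intro y
      have h1 : ⁅E.symm ((0 : g), adE x), E.symm (y, (0 : LieDerivation k g g))⁆
          = E.symm (⁅x, y⁆, 0) := by
        rw [hb]
        congr 2
        · simp [hadapp]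
        · simp
      have h2 := hlie (E.symm (0, adE x)) (E.symm (y, 0))
      rw [h1, hfix, hfix, ← hp] at h2
      have h3 : ⁅p, E.symm (y, (0 : LieDerivation k g g))⁆
          = E.symm (⁅(E p).1, y⁆ + (E p).2 y - (0 : LieDerivation k g g) (E p).1, ⁅(E p).2, 0⁆) := by
        conv_lhs => rw [← E.symm_apply_apply p]
        rw [hb]
      rw [h3] at h2
      have h4 := E.symm.injective h2
      have h5 := congrArg Prod.fst h4
      simp only [LieDerivation.coe_zero, Pi.zero_apply, sub_zero] at h5
      rw [sub_lie, h5]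
      abel
    have hD : (E p).2 = adE (x - (E p).1) := by
      ext y
      rw [key y, hadapp]
    have hT : T σv x = x - (E p).1 := by
      have h6 := hTdef σv x
      rw [← hp, hD, hadsy] at h6
      exact h6
    have hEp : E p = (x - T σv x, adE (T σv x)) := by
      have hfst : (E p).1 = x - T σv x := by rw [hT, sub_sub_cancel]
      have hsnd : (E p).2 = adE (T σv x) := by rw [hD, hT]
      exact Prod.ext hfst hsnd
    rw [← hEp, E.symm_apply_apply]
  -- T is a Lie algebra morphism
  have hhom : ∀ (σv : Hol ≃ₗ[k] Hol)
      (hlie : ∀ x y : Hol, σv ⁅x, y⁆ = ⁅σv x, σv y⁆)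
      (hfix : ∀ a : g, σv (E.symm (a, 0)) = E.symm (a, 0)) (x y : g),
      T σv ⁅x, y⁆ = ⁅T σv x, T σv y⁆ := by
    intro σv hlie hfix x y
    have h1 : ⁅E.symm ((0 : g), adE x), E.symm ((0 : g), adE y)⁆
        = E.symm (0, adE ⁅x, y⁆) := by
      rw [hb, hadlie]
      congr 2
      simp
    have h2 := hlie (E.symm (0, adE x)) (E.symm (0, adE y))
    rw [h1, hchar σv hlie hfix, hchar σv hlie hfix, hchar σv hlie hfix, hb] at h2
    have h4 := congrArg Prod.snd (E.symm.injective h2)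
    simp only at h4
    rw [← hadlie] at h4
    exact adE.injective h4
  -- compatibility of T with composition
  have hcomp : ∀ (σv τv ρv : Hol ≃ₗ[k] Hol),
      (∀ x y : Hol, σv ⁅x, y⁆ = ⁅σv x, σv y⁆) →
      (∀ a : g, σv (E.symm (a, 0)) = E.symm (a, 0)) →
      (∀ x y : Hol, τv ⁅x, y⁆ = ⁅τv x, τv y⁆) →
      (∀ a : g, τv (E.symm (a, 0)) = E.symm (a, 0)) →
      (∀ x y : Hol, ρv ⁅x, y⁆ = ⁅ρv x, ρv y⁆) →
      (∀ a : g, ρv (E.symm (a, 0)) = E.symm (a, 0)) →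
      (∀ p : Hol, ρv p = σv (τv p)) → ∀ x : g, T ρv x = T σv (T τv x) := by
    intro σv τv ρv hl1 hf1 hl2 hf2 hl3 hf3 hmul x
    have h1 := hchar ρv hl3 hf3 x
    rw [hmul, hchar τv hl2 hf2 x] at h1
    have hsplit : E.symm (x - T τv x, adE (T τv x))
        = E.symm (x - T τv x, (0 : LieDerivation k g g)) + E.symm (0, adE (T τv x)) := by
      rw [← map_add, Prod.mk_add_mk, add_zero, zero_add]
    rw [hsplit, map_add, hf1, hchar σv hl1 hf1, ← map_add] at h1
    have h2 := congrArg Prod.snd (E.symm.injective h1)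
    simp only [Prod.mk_add_mk, zero_add] at h2
    exact (adE.injective h2).symm
  have hone : ∀ x : g, T (1 : Hol ≃ₗ[k] Hol) x = x := by
    intro x
    have h1 : E.symm ((0 : g), adE x) = E.symm (x - T 1 x, adE (T 1 x)) :=
      hchar 1 (fun _ _ => rfl) (fun _ => rfl) x
    have h2 := congrArg Prod.snd (E.symm.injective h1)
    simp only at h2
    exact (adE.injective h2).symm
  -- the inverse of a Galois automorphism is Galois
  have hinv : ∀ (σv : Hol ≃ₗ[k] Hol),
      (∀ x y : Hol, σv ⁅x, y⁆ = ⁅σv x, σv y⁆) →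
      (∀ a : g, σv (E.symm (a, 0)) = E.symm (a, 0)) →
      (∀ x y : Hol, σv.symm ⁅x, y⁆ = ⁅σv.symm x, σv.symm y⁆) ∧
        (∀ a : g, σv.symm (E.symm (a, 0)) = E.symm (a, 0)) := by
    intro σv hl hf
    constructor
    · intro x y
      apply σv.injective
      rw [σv.apply_symm_apply, hl, σv.apply_symm_apply, σv.apply_symm_apply]
    · intro a
      apply σv.injective
      rw [σv.apply_symm_apply, hf]
  -- T σ and T σ⁻¹ are mutually inverse
  have hTinv : ∀ (σv : Hol ≃ₗ[k] Hol),
      (∀ x y : Hol, σv ⁅x, y⁆ = ⁅σv x, σv y⁆) →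
      (∀ a : g, σv (E.symm (a, 0)) = E.symm (a, 0)) →
      ∀ _ : Unit, (T σv ∘ₗ T σv.symm = LinearMap.id) ∧ (T σv.symm ∘ₗ T σv = LinearMap.id) := by
    intro σv hl hf _
    obtain ⟨hl', hf'⟩ := hinv σv hl hf
    constructor
    · apply LinearMap.ext; intro x
      have h := hcomp σv σv.symm 1 hl hf hl' hf' (fun _ _ => rfl) (fun _ => rfl)
        (fun p => (σv.apply_symm_apply p).symm) x
      rw [hone] at h
      simpa using h.symm
    · apply LinearMap.ext; intro x
      have h := hcomp σv.symm σv 1 hl' hf' hl hf (fun _ _ => rfl) (fun _ => rfl)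
        (fun p => (σv.symm_apply_apply p).symm) x
      rw [hone] at h
      simpa using h.symm
  -- the map M building the inverse direction
  let U : (g × LieDerivation k g g) →ₗ[k] g :=
    adE.symm.toLinearMap ∘ₗ LinearMap.snd k g (LieDerivation k g g)
  let M : (g →ₗ[k] g) → ((g × LieDerivation k g g) →ₗ[k] (g × LieDerivation k g g)) :=
    fun t => LinearMap.prod (LinearMap.fst k g (LieDerivation k g g) + U - t ∘ₗ U)
      (adE.toLinearMap ∘ₗ t ∘ₗ U)
  have hM : ∀ (t : g →ₗ[k] g) (a : g) (D : LieDerivation k g g),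
      M t (a, D) = (a + adE.symm D - t (adE.symm D), adE (t (adE.symm D))) := fun _ _ _ => rfl
  have hMinv : ∀ τ : g ≃ₗ[k] g,
      (M τ.toLinearMap ∘ₗ M τ.symm.toLinearMap = LinearMap.id) ∧
      (M τ.symm.toLinearMap ∘ₗ M τ.toLinearMap = LinearMap.id) := by
    intro τ
    constructor
    · apply LinearMap.ext; rintro ⟨a, D⟩
      simp only [LinearMap.comp_apply, hM, hadsy, LinearEquiv.coe_coe,
        LinearEquiv.apply_symm_apply, hadsy', LinearMap.id_apply, Prod.mk.injEq]
      exact ⟨by abel, trivial⟩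
    · apply LinearMap.ext; rintro ⟨a, D⟩
      simp only [LinearMap.comp_apply, hM, hadsy, LinearEquiv.coe_coe,
        LinearEquiv.symm_apply_apply, hadsy', LinearMap.id_apply, Prod.mk.injEq]
      exact ⟨by abel, trivial⟩
  let S : (g ≃ₗ[k] g) → (Hol ≃ₗ[k] Hol) := fun τ =>
    E ≪≫ₗ (LinearEquiv.ofLinear (M τ.toLinearMap) (M τ.symm.toLinearMap)
      (hMinv τ).1 (hMinv τ).2) ≪≫ₗ E.symm
  have hSapp : ∀ (τ : g ≃ₗ[k] g) (p : Hol), S τ p = E.symm (M τ.toLinearMap (E p)) :=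
    fun _ _ => rfl
  have hS : ∀ (t : g →ₗ[k] g) (c z : g),
      E.symm (M t (c, adE z)) = E.symm (c + z - t z, adE (t z)) := by
    intro t c z
    rw [hM, hadsy]
  have hSfix : ∀ (τ : g ≃ₗ[k] g) (a : g), S τ (E.symm (a, 0)) = E.symm (a, 0) := by
    intro τ a
    rw [hSapp, E.apply_symm_apply, hM]
    simp
  have hSlie : ∀ (τ : g ≃ₗ[k] g), (∀ x y : g, τ ⁅x, y⁆ = ⁅τ x, τ y⁆) →
      ∀ p q : Hol, S τ ⁅p, q⁆ = ⁅S τ p, S τ q⁆ := by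
    intro τ hτ p q
    obtain ⟨x, hx⟩ : ∃ x, (E p).2 = adE x := ⟨adE.symm (E p).2, (hadsy' _).symm⟩
    obtain ⟨y, hy⟩ : ∃ y, (E q).2 = adE y := ⟨adE.symm (E q).2, (hadsy' _).symm⟩
    have hp : p = E.symm ((E p).1, adE x) := by rw [← hx, Prod.mk.eta, E.symm_apply_apply]
    have hq : q = E.symm ((E q).1, adE y) := by rw [← hy, Prod.mk.eta, E.symm_apply_apply]
    set a := (E p).1
    set b := (E q).1
    have hS' : ∀ (c z : g), S τ (E.symm (c, adE z)) = E.symm (c + z - τ z, adE (τ z)) := by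
      intro c z
      rw [hSapp, E.apply_symm_apply]
      exact hS _ _ _
    rw [hp, hq, hb, ← hadlie, hS', hS', hS', hb, ← hadlie]
    congr 1
    refine Prod.ext ?_ ?_
    · simp only [hadapp, hτ]
      have s1 : ⁅y, a⁆ = -⁅a, y⁆ := (lie_skew y a).symm
      have s2 : ⁅τ y, a⁆ = -⁅a, τ y⁆ := (lie_skew (τ y) a).symm
      have s3 : ⁅τ y, x⁆ = -⁅x, τ y⁆ := (lie_skew (τ y) x).symm
      have s4 : ⁅τ y, τ x⁆ = -⁅τ x, τ y⁆ := (lie_skew (τ y) (τ x)).symm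
      simp only [lie_add, add_lie, lie_sub, sub_lie, s1, s2, s3, s4]
      abel
    · simp only [hτ]
  -- assemble the equivalence
  refine ⟨{
    toFun := fun σ => ⟨LinearEquiv.ofLinear (T σ.val) (T σ.val.symm)
        ((hTinv σ.val σ.2.1 σ.2.2 ()).1) ((hTinv σ.val σ.2.1 σ.2.2 ()).2),
      fun x y => hhom σ.val σ.2.1 σ.2.2 x y⟩
    invFun := fun τ => ⟨S τ.val, hSlie τ.val τ.2, hSfix τ.val⟩
    left_inv := ?_
    right_inv := ?_ }, ?_, ?_⟩
  · -- left inverse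
    intro σ
    apply Subtype.ext
    apply LinearEquiv.ext
    intro p
    obtain ⟨x, hx⟩ : ∃ x, (E p).2 = adE x := ⟨adE.symm (E p).2, (hadsy' _).symm⟩
    have hp : p = E.symm ((E p).1, (0 : LieDerivation k g g)) + E.symm (0, adE x) := by
      rw [← map_add, Prod.mk_add_mk, add_zero, zero_add, ← hx, Prod.mk.eta,
        E.symm_apply_apply]
    have h1 : S (LinearEquiv.ofLinear (T σ.val) (T σ.val.symm)
        ((hTinv σ.val σ.2.1 σ.2.2 ()).1) ((hTinv σ.val σ.2.1 σ.2.2 ()).2))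
        (E.symm ((E p).1, (0 : LieDerivation k g g))) = E.symm ((E p).1, 0) :=
      hSfix _ _
    have h2 : S (LinearEquiv.ofLinear (T σ.val) (T σ.val.symm)
        ((hTinv σ.val σ.2.1 σ.2.2 ()).1) ((hTinv σ.val σ.2.1 σ.2.2 ()).2))
        (E.symm ((0 : g), adE x)) = E.symm (0 + x - T σ.val x, adE (T σ.val x)) := by
      rw [hSapp, E.apply_symm_apply]
      exact hS _ _ _
    show S _ p = σ.val p
    rw [hp, map_add, map_add, h1, h2, σ.2.2, hchar σ.val σ.2.1 σ.2.2 x, zero_add]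
  · -- right inverse
    intro τ
    apply Subtype.ext
    apply LinearEquiv.ext
    intro x
    have h1 : S τ.val (E.symm ((0 : g), adE x)) = E.symm (0 + x - τ.val x, adE (τ.val x)) := by
      rw [hSapp, E.apply_symm_apply]
      exact hS _ _ _
    show T (S τ.val) x = τ.val x
    rw [hTdef, h1, E.apply_symm_apply, hadsy]
  · -- compatibility with multiplication
    intro σ τ ρ hmul
    apply LinearEquiv.ext
    intro x
    exact hcomp σ.val τ.val ρ.val σ.2.1 σ.2.2 τ.2.1 τ.2.2 ρ.2.1 ρ.2.2
      (fun p => by rw [hmul]; rfl) x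
  · -- the explicit description
    intro σ x D D' hD hD'
    simp only [Equiv.coe_fn_mk, LinearEquiv.ofLinear_apply] at hD' ⊢
    have e1 : D = adE x := by
      ext y
      rw [hD y, hadapp]
    have e2 : D' = adE (T σ.val x) := by
      ext y
      rw [hD' y, hadapp]
    rw [e1, e2]
    exact hchar σ.val σ.2.1 σ.2.2 x
end

section
/- Let g be a Lie algebra and Δ ∈ Der(g) a derivation that is not inner, and let g_{(Δ)} = g × k with bracket [(x,a),(y,b)] = ([x,y] + bΔ(x) - aΔ(y), 0). Then Gal(g_{(Δ)}/g) is isomorphic to the additive group of the center Z(g): every automorphism of g_{(Δ)} fixing g pointwise has the form (x, a) ↦ (x + a z, a) for a unique z ∈ Z(g). -/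
def Tmap (k : Type*) (g : Type*) [Field k] [AddCommGroup g] [Module k g] (z : g) :
    (g × k) ≃ₗ[k] (g × k) where
  toFun p := (p.1 + p.2 • z, p.2)
  invFun p := (p.1 - p.2 • z, p.2)
  map_add' p q := by ext <;> simp [add_smul] <;> abel
  map_smul' c p := by ext <;> simp [mul_smul]
  left_inv p := by simp
  right_inv p := by simp


/-- for a non-inner derivation `Δ` of `g` and the codimension-1
extension `g_{(Δ)} = g × k` with bracket `[(x,a),(y,b)] = ([x,y] + bΔ(x) - aΔ(y), 0)`,
`Gal(g_{(Δ)}/g)` is isomorphic to the additive group of the center `Z(g)`: every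
automorphism fixing `g` pointwise has the form `(x, a) ↦ (x + a z, a)` for a
unique central `z`. -/
theorem stmt19 (k : Type*) [Field k] (g : Type*) [LieRing g] [LieAlgebra k g]
    (Δ : g →ₗ[k] g) (hΔ : ∀ x y : g, Δ ⁅x, y⁆ = ⁅Δ x, y⁆ + ⁅x, Δ y⁆)
    (hnotinner : ¬ ∃ δ : g, ∀ x : g, Δ x = ⁅δ, x⁆)
    (L : Type*) [LieRing L] [LieAlgebra k L] (E : L ≃ₗ[k] (g × k))
    (hbr : ∀ p q : L,
      E ⁅p, q⁆ = (⁅(E p).1, (E q).1⁆ + (E q).2 • Δ (E p).1 - (E p).2 • Δ (E q).1,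
                   (0 : k))) :
    ∃ F : {z : g // ∀ x : g, ⁅z, x⁆ = 0} ≃
          {σ : L ≃ₗ[k] L // (∀ x y : L, σ ⁅x, y⁆ = ⁅σ x, σ y⁆) ∧
            ∀ x : g, σ (E.symm (x, 0)) = E.symm (x, 0)},
      -- `F` turns addition of central elements into composition of automorphisms
      (∀ z w s : {z : g // ∀ x : g, ⁅z, x⁆ = 0},
        s.val = z.val + w.val → (F s).val = (F z).val * (F w).val) ∧
      -- explicit form of the automorphism attached to `z`
      (∀ z : {z : g // ∀ x : g, ⁅z, x⁆ = 0}, ∀ x : g, ∀ a : k,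
        (F z).val (E.symm (x, a)) = E.symm (x + a • z.val, a)) := by
  classical
  have hΔ0 : Δ ≠ 0 := by
    intro h; exact hnotinner ⟨0, fun x => by simp [h]⟩
  have hsymm : ∀ u v : g × k, ⁅E.symm u, E.symm v⁆
      = E.symm (⁅u.1, v.1⁆ + v.2 • Δ u.1 - u.2 • Δ v.1, 0) := by
    intro u v
    conv_lhs => rw [← E.symm_apply_apply ⁅E.symm u, E.symm v⁆]
    rw [hbr]; simp
  have hdecomp : ∀ (x : g) (a : k), (E.symm (x, a) : L)
      = E.symm (x, 0) + a • E.symm ((0 : g), (1 : k)) := by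
    intro x a
    rw [← map_smul, ← map_add]
    congr 1
    simp
  have hform : ∀ (f h : L ≃ₗ[k] L),
      (∀ (x : g) (a : k), f (E.symm (x, a)) = h (E.symm (x, a))) → f = h := by
    intro f h H
    apply LinearEquiv.ext; intro p
    have hp : p = E.symm ((E p).1, (E p).2) := by simp
    rw [hp]; exact H _ _
  set T : {z : g // ∀ x : g, ⁅z, x⁆ = 0} → (L ≃ₗ[k] L) :=
    fun z => E.trans ((Tmap k g z.val).trans E.symm) with hT
  have hTapp : ∀ z (x : g) (a : k), T z (E.symm (x, a)) = E.symm (x + a • z.val, a) := by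
    intro z x a; simp [hT, Tmap]
  have hcent' : ∀ (z : {z : g // ∀ x : g, ⁅z, x⁆ = 0}) (x : g), ⁅x, z.val⁆ = 0 := by
    intro z x; rw [← lie_skew, z.prop, neg_zero]
  have hTbr : ∀ z, ∀ p q : L, T z ⁅p, q⁆ = ⁅T z p, T z q⁆ := by
    intro z p q
    have hp : p = E.symm ((E p).1, (E p).2) := by simp
    have hq : q = E.symm ((E q).1, (E q).2) := by simp
    rw [hp, hq, hsymm, hTapp, hTapp, hTapp, hsymm]
    simp only [lie_add, add_lie, z.prop, hcent' z, smul_add, map_add, map_smul,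
      lie_self, smul_zero, add_zero, zero_add, zero_smul]
    congr 1
    ext
    · simp [z.prop, hcent' z, smul_smul, mul_comm]
      abel
    · simp
  have hTfix : ∀ z, ∀ x : g, T z (E.symm (x, 0)) = E.symm (x, 0) := by
    intro z x; rw [hTapp]; simp
  -- the inverse direction: any σ in the Galois group has this form
  have key : ∀ σ : {σ : L ≃ₗ[k] L // (∀ x y : L, σ ⁅x, y⁆ = ⁅σ x, σ y⁆) ∧
      ∀ x : g, σ (E.symm (x, 0)) = E.symm (x, 0)},
      (∀ y : g, ⁅(E (σ.val (E.symm ((0:g), (1:k))))).1, y⁆ = 0) ∧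
      (E (σ.val (E.symm ((0:g), (1:k))))).2 = 1 := by
    intro σ
    obtain ⟨hσbr, hσfix⟩ := σ.prop
    set z : g := (E (σ.val (E.symm ((0:g), (1:k))))).1 with hz
    set c : k := (E (σ.val (E.symm ((0:g), (1:k))))).2 with hc
    have hv : σ.val (E.symm ((0:g), (1:k))) = E.symm (z, c) := by
      rw [hz, hc]; simp
    have hrel : ∀ y : g, ⁅z, y⁆ = (c - 1) • Δ y := by
      intro y
      have h1 := hσbr (E.symm ((0:g), (1:k))) (E.symm (y, (0:k)))
      rw [hsymm, hv, hσfix y, hsymm] at h1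
      simp only [zero_lie, smul_zero, map_zero, zero_add, one_smul, zero_smul,
        sub_zero] at h1
      -- h1 : σ.val (E.symm (0 - Δ y, 0)) = E.symm (⁅z, y⁆ - c • Δ y, 0)
      rw [zero_sub, hσfix (-Δ y)] at h1
      have h2 := E.symm.injective h1.symm
      have h3 : ⁅z, y⁆ + 0 - c • Δ y = - Δ y := congrArg Prod.fst h2
      have : ⁅z, y⁆ = c • Δ y - Δ y := by linear_combination (norm := module) h3
      rw [this, sub_smul, one_smul]
    have hc1 : c = 1 := by
      by_contra hcne
      refine hnotinner ⟨(c - 1)⁻¹ • z, fun y => ?_⟩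
      rw [smul_lie, hrel y, smul_smul, inv_mul_cancel₀ (sub_ne_zero.mpr hcne), one_smul]
    refine ⟨fun y => ?_, hc1⟩
    show ⁅z, y⁆ = 0
    rw [hrel y, hc1, sub_self, zero_smul]
  have keyform : ∀ σ : {σ : L ≃ₗ[k] L // (∀ x y : L, σ ⁅x, y⁆ = ⁅σ x, σ y⁆) ∧
      ∀ x : g, σ (E.symm (x, 0)) = E.symm (x, 0)}, ∀ (x : g) (a : k),
      σ.val (E.symm (x, a)) = E.symm (x + a • (E (σ.val (E.symm ((0:g), (1:k))))).1, a) := by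
    intro σ x a
    obtain ⟨hcent, hc1⟩ := key σ
    set z : g := (E (σ.val (E.symm ((0:g), (1:k))))).1 with hz
    have hv : σ.val (E.symm ((0:g), (1:k))) = E.symm (z, 1) := by
      conv_lhs => rw [← E.symm_apply_apply (σ.val (E.symm ((0:g), (1:k))))]
      rw [show E (σ.val (E.symm ((0:g), (1:k)))) = (z, 1) from Prod.ext_iff.mpr ⟨rfl, hc1⟩]
    rw [hdecomp x a, map_add, map_smul, σ.prop.2 x, hv, ← map_smul, ← map_add]
    congr 1
    ext
    · simp
    · simp
  refine ⟨{
    toFun := fun z => ⟨T z, hTbr z, hTfix z⟩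
    invFun := fun σ => ⟨(E (σ.val (E.symm ((0:g), (1:k))))).1, (key σ).1⟩
    left_inv := by
      intro z
      apply Subtype.ext
      have : T z (E.symm ((0:g), (1:k))) = E.symm (z.val, 1) := by
        rw [hTapp]; simp
      simp [this]
    right_inv := by
      intro σ
      apply Subtype.ext
      apply hform
      intro x a
      rw [hTapp, keyform σ x a]
  }, ?_, ?_⟩
  · intro z w s hs
    apply hform
    intro x a
    show T s (E.symm (x, a)) = T z (T w (E.symm (x, a)))
    rw [hTapp, hTapp, hTapp, hs]
    congr 2
    rw [smul_add]
    abel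
  · intro z x a
    exact hTapp z x a
end
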